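/- Let Γ be an uncountable index set and let p be a real number with 1 ≤ p < ∞. Then the isometry group of the complex Banach space ℓ^p(Γ) is not algebraically reflexive: there exists a continuous linear operator T on ℓ^p(Γ) which is not surjective, yet for every x ∈ ℓ^p(Γ) there is a surjective linear isometry L of ℓ^p(Γ) with T x = L x. -/

import Mathlib

open Function Set
open scoped ENNReal

namespace LpNotReflexAux

variable {Γ : Type*} {q : ℝ≥0∞}

lemma memℓp_extend (hq : 0 < q.toReal) {σ : Γ → Γ} (hσ : Injective σ)
    {x : Γ → ℂ} (hx : Memℓp x q) : Memℓp (Function.extend σ x 0) q := by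
  rw [memℓp_gen_iff hq] at hx ⊢
  have h1 : ((fun γ => ‖Function.extend σ x 0 γ‖ ^ q.toReal) ∘ σ)
      = fun γ => ‖x γ‖ ^ q.toReal := by
    funext γ; simp [Function.comp, hσ.extend_apply]
  refine (hσ.summable_iff fun γ hγ => ?_).mp (h1 ▸ hx)
  have : Function.extend σ x 0 γ = 0 := Function.extend_apply' _ _ _ (fun h => hγ h)
  simp [this, Real.zero_rpow hq.ne']

lemma tsum_extend (hq : 0 < q.toReal) {σ : Γ → Γ} (hσ : Injective σ) (x : Γ → ℂ) :
    ∑' γ, ‖Function.extend σ x 0 γ‖ ^ q.toReal = ∑' γ, ‖x γ‖ ^ q.toReal := by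
  have h2 : support (fun γ => ‖Function.extend σ x 0 γ‖ ^ q.toReal) ⊆ Set.range σ := by
    intro γ hγ
    by_contra hr
    have : Function.extend σ x 0 γ = 0 := Function.extend_apply' _ _ _ (fun h => hr h)
    exact hγ (by simp [this, Real.zero_rpow hq.ne'])
  rw [← hσ.tsum_eq h2]
  congr 1
  funext γ
  simp [hσ.extend_apply]

/-- The linear isometry of `ℓ^q(Γ)` induced by composition along an injection `σ`. -/
noncomputable def extendLi [Fact (1 ≤ q)] (hq : 0 < q.toReal) {σ : Γ → Γ}
    (hσ : Injective σ) : lp (fun _ : Γ => ℂ) q →ₗᵢ[ℂ] lp (fun _ : Γ => ℂ) q where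
  toFun x := ⟨Function.extend σ (⇑x) 0, memℓp_extend hq hσ (lp.memℓp x)⟩
  map_add' x y := by
    apply lp.ext
    funext γ
    rcases em (∃ a, σ a = γ) with ⟨a, rfl⟩ | h
    · show Function.extend σ (⇑(x + y)) 0 (σ a) = Function.extend σ (⇑x) 0 (σ a) + Function.extend σ (⇑y) 0 (σ a)
      rw [hσ.extend_apply, hσ.extend_apply, hσ.extend_apply]
      rfl
    · show Function.extend σ (⇑(x + y)) 0 γ = Function.extend σ (⇑x) 0 γ + Function.extend σ (⇑y) 0 γ
      rw [Function.extend_apply' _ _ _ h, Function.extend_apply' _ _ _ h, Function.extend_apply' _ _ _ h]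
      simp
  map_smul' c x := by
    apply lp.ext
    funext γ
    rcases em (∃ a, σ a = γ) with ⟨a, rfl⟩ | h
    · simp [hσ.extend_apply]
    · simp [Function.extend_apply' _ _ _ h]
  norm_map' x := by
    rw [lp.norm_eq_tsum_rpow hq, lp.norm_eq_tsum_rpow hq]
    congr 1
    exact tsum_extend hq hσ (⇑x)

@[simp] lemma extendLi_apply [Fact (1 ≤ q)] (hq : 0 < q.toReal) {σ : Γ → Γ}
    (hσ : Injective σ) (x : lp (fun _ : Γ => ℂ) q) (γ : Γ) :
    (extendLi hq hσ x : ∀ _ : Γ, ℂ) γ = Function.extend σ (⇑x) 0 γ := rfl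

lemma extend_equiv_apply (e : Γ ≃ Γ) (x : Γ → ℂ) (γ : Γ) :
    Function.extend (⇑e) x 0 γ = x (e.symm γ) := by
  conv_lhs => rw [show γ = e (e.symm γ) from (e.apply_symm_apply γ).symm]
  exact e.injective.extend_apply _ _ _

/-- The surjective linear isometry of `ℓ^q(Γ)` induced by a bijection of `Γ`. -/
noncomputable def congrLi [Fact (1 ≤ q)] (hq : 0 < q.toReal) (e : Γ ≃ Γ) :
    lp (fun _ : Γ => ℂ) q ≃ₗᵢ[ℂ] lp (fun _ : Γ => ℂ) q where
  toLinearEquiv := LinearEquiv.ofLinear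
    (extendLi (q := q) hq e.injective).toLinearMap
    (extendLi (q := q) hq e.symm.injective).toLinearMap
    (by
      ext x γ
      show Function.extend (⇑e) (⇑(extendLi hq e.symm.injective x)) 0 γ = x γ
      rw [extend_equiv_apply]
      show Function.extend (⇑e.symm) (⇑x) 0 (e.symm γ) = x γ
      rw [extend_equiv_apply]
      simp)
    (by
      ext x γ
      show Function.extend (⇑e.symm) (⇑(extendLi hq e.injective x)) 0 γ = x γ
      rw [extend_equiv_apply]
      show Function.extend (⇑e) (⇑x) 0 (e.symm.symm γ) = x γ
      rw [extend_equiv_apply]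
      simp)
  norm_map' x := (extendLi (q := q) hq e.injective).norm_map x

@[simp] lemma congrLi_apply [Fact (1 ≤ q)] (hq : 0 < q.toReal) (e : Γ ≃ Γ)
    (x : lp (fun _ : Γ => ℂ) q) (γ : Γ) :
    (congrLi hq e x : ∀ _ : Γ, ℂ) γ = x (e.symm γ) :=
  extend_equiv_apply e (⇑x) γ

lemma exists_injective_not_surjective (Γ : Type*) [Infinite Γ] :
    ∃ σ : Γ → Γ, Injective σ ∧ ∃ γ₀, γ₀ ∉ Set.range σ := by
  classical
  let n : ℕ ↪ Γ := Infinite.natEmbedding Γ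
  refine ⟨Function.extend (⇑n) (fun k => n (k + 1)) id, ?_, n 0, ?_⟩
  · intro a b hab
    rcases em (∃ k, n k = a) with ⟨k, rfl⟩ | ha <;>
      rcases em (∃ j, n j = b) with ⟨j, rfl⟩ | hb
    · rw [n.injective.extend_apply, n.injective.extend_apply] at hab
      have hkj : k = j := by
        have := n.injective hab
        omega
      rw [hkj]
    · rw [n.injective.extend_apply, Function.extend_apply' _ _ _ hb] at hab
      exact absurd ⟨k + 1, hab⟩ hb
    · rw [Function.extend_apply' _ _ _ ha, n.injective.extend_apply] at hab
      exact absurd ⟨j + 1, hab.symm⟩ ha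
    · rwa [Function.extend_apply' _ _ _ ha, Function.extend_apply' _ _ _ hb] at hab
  · rintro ⟨γ, hγ⟩
    rcases em (∃ k, n k = γ) with ⟨k, rfl⟩ | h
    · rw [n.injective.extend_apply] at hγ
      exact Nat.succ_ne_zero k (n.injective hγ)
    · rw [Function.extend_apply' _ _ _ h] at hγ
      exact h ⟨0, hγ.symm⟩

end LpNotReflexAux

open LpNotReflexAux Function

/-- For an uncountable index set Γ and 1 ≤ p < ∞, the isometry group of
ℓ^p(Γ) is not algebraically reflexive: there is a non-surjective continuous linear
operator agreeing at each point with some surjective linear isometry. -/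
theorem lp_uncountable_isometry_group_not_algebraically_reflexive
    (Γ : Type*) [Uncountable Γ] (p : ℝ) (hp1 : 1 ≤ p) :
    letI : Fact (1 ≤ ENNReal.ofReal p) := ⟨ENNReal.one_le_ofReal.mpr hp1⟩
    ∃ T : lp (fun _ : Γ => ℂ) (ENNReal.ofReal p) →L[ℂ] lp (fun _ : Γ => ℂ) (ENNReal.ofReal p),
      ¬ Function.Surjective T ∧
      ∀ x, ∃ L : lp (fun _ : Γ => ℂ) (ENNReal.ofReal p) ≃ₗᵢ[ℂ]
          lp (fun _ : Γ => ℂ) (ENNReal.ofReal p), T x = L x := by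
  letI : Fact (1 ≤ ENNReal.ofReal p) := ⟨ENNReal.one_le_ofReal.mpr hp1⟩
  classical
  set q : ℝ≥0∞ := ENNReal.ofReal p with hqdef
  have hq : 0 < q.toReal := by
    rw [hqdef, ENNReal.toReal_ofReal (by linarith)]
    linarith
  obtain ⟨σ, hσ, γ₀, hγ₀⟩ := exists_injective_not_surjective Γ
  refine ⟨(extendLi (q := q) hq hσ).toContinuousLinearMap, ?_, ?_⟩
  · -- not surjective
    intro hsurj
    obtain ⟨x, hx⟩ := hsurj (lp.single q γ₀ 1)
    have h0 : (extendLi (q := q) hq hσ x : ∀ _ : Γ, ℂ) γ₀ = 0 := by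
      rw [extendLi_apply, Function.extend_apply' _ _ _ (fun h => hγ₀ h)]
      rfl
    have h1 : (lp.single q γ₀ (1 : ℂ) : ∀ _ : Γ, ℂ) γ₀ = 1 :=
      lp.single_apply_self q γ₀ 1
    rw [show (extendLi (q := q) hq hσ).toContinuousLinearMap x
        = extendLi (q := q) hq hσ x from rfl] at hx
    rw [hx, h1] at h0
    exact one_ne_zero h0
  · -- pointwise agreement with a surjective isometry
    intro x
    have hS : (support (⇑x)).Countable := by
      have hsum := (lp.memℓp x).summable hq
      have hsupp := hsum.countable_support
      refine hsupp.mono ?_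
      intro γ hγ
      simp only [mem_support] at hγ ⊢
      exact (Real.rpow_pos_of_pos (norm_pos_iff.mpr hγ) _).ne'
    set S : Set Γ := support (⇑x) with hSdef
    have hcard : Cardinal.mk S < Cardinal.mk Γ := by
      calc Cardinal.mk S ≤ Cardinal.aleph0 := hS.le_aleph0
        _ < Cardinal.mk Γ := Cardinal.aleph0_lt_mk_iff.mpr ‹_›
    obtain ⟨e, he⟩ := Cardinal.extend_function_of_lt
      (⟨fun s : S => σ s, fun a b hab => Subtype.ext (hσ hab)⟩ : S ↪ Γ)
      hcard ⟨Equiv.refl Γ⟩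
    refine ⟨congrLi hq e, ?_⟩
    apply lp.ext
    funext γ
    show (extendLi (q := q) hq hσ x : ∀ _ : Γ, ℂ) γ = (congrLi hq e x : ∀ _ : Γ, ℂ) γ
    rw [extendLi_apply, congrLi_apply]
    rcases em (∃ a, σ a = γ) with ⟨a, rfl⟩ | h
    · rw [hσ.extend_apply]
      by_cases haS : a ∈ S
      · have : e a = σ a := he ⟨a, haS⟩
        rw [← this, e.symm_apply_apply]
      · have hxa : x a = 0 := by simpa [hSdef, mem_support, not_not] using haS
        rw [hxa]
        by_cases hsS : e.symm (σ a) ∈ S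
        · exfalso
          have : e (e.symm (σ a)) = σ (e.symm (σ a)) := he ⟨_, hsS⟩
          rw [e.apply_symm_apply] at this
          have := hσ this
          rw [← this] at hsS
          exact haS hsS
        · have : x (e.symm (σ a)) = 0 := by
            simpa [hSdef, mem_support, not_not] using hsS
          rw [this]
    · rw [Function.extend_apply' _ _ _ h]
      by_cases hsS : e.symm γ ∈ S
      · exfalso
        have : e (e.symm γ) = σ (e.symm γ) := he ⟨_, hsS⟩
        rw [e.apply_symm_apply] at this
        exact h ⟨_, this.symm⟩
      · have : x (e.symm γ) = 0 := by
          simpa [hSdef, mem_support, not_not] using hsS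
        rw [this]
        rfl
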